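/- Let A ∈ ℝ^{n×n} be Hurwitz and invertible. Define the (unscaled) Newton iteration A₀ = A, A_{k+1} = (A_k + A_k^{-1})/2. Then every A_k is Hurwitz and invertible, and A_k converges to −I_n as k → ∞. -/

import Mathlib

open Matrix Filter ENNReal
open scoped NNReal

/-- A real square matrix is Hurwitz if every (complex) eigenvalue has
strictly negative real part. -/
def IsHurwitz {n : ℕ} (A : Matrix (Fin n) (Fin n) ℝ) : Prop :=
  ∀ μ ∈ spectrum ℂ (A.map (algebraMap ℝ ℂ)), μ.re < 0

theorem tendsto_pow_zero_of_spectralRadius_lt_one {A : Type*} [NormedRing A] [NormedAlgebra ℂ A]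
    [CompleteSpace A] (a : A) (h : spectralRadius ℂ a < 1) :
    Tendsto (fun m : ℕ => a ^ m) atTop (nhds 0) := by
  obtain ⟨r, hr, hr1⟩ := exists_between h
  lift r to ℝ≥0 using hr1.ne_top
  have hr1' : (r : ℝ) < 1 := by exact_mod_cast hr1
  have hge := spectrum.pow_nnnorm_pow_one_div_tendsto_nhds_spectralRadius a
  have hev : ∀ᶠ m : ℕ in atTop, (‖a ^ m‖₊ : ℝ≥0∞) ^ (1 / m : ℝ) < r :=
    hge.eventually_lt_const hr
  apply squeeze_zero_norm' (a := fun m => (r : ℝ) ^ m)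
  · filter_upwards [hev, eventually_ge_atTop 1] with m hm hm1
    have hm0 : (m : ℝ) ≠ 0 := by positivity
    have : ((‖a ^ m‖₊ : ℝ≥0∞) ^ (1 / m : ℝ)) ^ (m : ℝ) ≤ (r : ℝ≥0∞) ^ (m : ℝ) :=
      ENNReal.rpow_le_rpow hm.le (by positivity)
    rw [← ENNReal.rpow_mul, one_div, inv_mul_cancel₀ hm0, ENNReal.rpow_one,
      ENNReal.rpow_natCast] at this
    have := (ENNReal.coe_le_coe.mp (by simpa [← ENNReal.coe_pow] using this))
    calc ‖a ^ m‖ = ((‖a ^ m‖₊ : ℝ≥0) : ℝ) := rfl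
      _ ≤ ((r ^ m : ℝ≥0) : ℝ) := by exact_mod_cast this
      _ = (r : ℝ) ^ m := by push_cast; ring
  · exact tendsto_pow_atTop_nhds_zero_of_lt_one r.coe_nonneg hr1'

variable {n : ℕ}

local notation "Mat" => Matrix (Fin n) (Fin n) ℂ

lemma mem_spec_iff (M : Mat) (μ : ℂ) : μ ∈ spectrum ℂ M ↔ (M - μ • 1).det = 0 := by
  rw [spectrum.mem_iff, Algebra.algebraMap_eq_smul_one, ← IsUnit.neg_iff, neg_sub,
    Matrix.isUnit_iff_isUnit_det, isUnit_iff_ne_zero, not_ne_iff]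

lemma det_ne_of_hurwitz {M : Mat} (hH : ∀ μ ∈ spectrum ℂ M, μ.re < 0) {μ : ℂ}
    (hμ : 0 ≤ μ.re) : (M - μ • 1).det ≠ 0 := fun h =>
  absurd (hH μ ((mem_spec_iff M μ).2 h)) (not_lt.2 hμ)

lemma det_ne_zero_of_hurwitz {M : Mat} (hH : ∀ μ ∈ spectrum ℂ M, μ.re < 0) : M.det ≠ 0 := by
  have := det_ne_of_hurwitz hH (μ := 0) le_rfl
  simpa using this

lemma det_sub_one_ne_zero {M : Mat} (hH : ∀ μ ∈ spectrum ℂ M, μ.re < 0) : (M - 1).det ≠ 0 := by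
  have := det_ne_of_hurwitz hH (μ := 1) (by norm_num)
  simpa using this

lemma hurwitz_step {M : Mat} (hH : ∀ μ ∈ spectrum ℂ M, μ.re < 0) :
    ∀ μ ∈ spectrum ℂ ((2 : ℂ)⁻¹ • (M + M⁻¹)), μ.re < 0 := by
  intro μ hμ
  have hd : M.det ≠ 0 := det_ne_zero_of_hurwitz hH
  have hMM : M * M⁻¹ = 1 := Matrix.mul_nonsing_inv M (isUnit_iff_ne_zero.2 hd)
  have h1 : (((2 : ℂ)⁻¹ • (M + M⁻¹)) - μ • 1).det = 0 := (mem_spec_iff _ _).1 hμ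
  obtain ⟨z, hz⟩ := IsAlgClosed.exists_pow_nat_eq (μ ^ 2 - 1) (n := 2) (by norm_num)
  set r := μ + z with hr
  set s := μ - z with hs
  have hrs : r * s = 1 := by rw [hr, hs]; linear_combination -hz
  have hsum : r + s = 2 * μ := by rw [hr, hs]; ring
  -- the key factorization
  have key : M * ((2 : ℂ) • (((2 : ℂ)⁻¹ • (M + M⁻¹)) - μ • 1)) = (M - r • 1) * (M - s • 1) := by
    have expand : (M - r • 1) * (M - s • 1) = M * M - ((r + s) • M) + (r * s) • 1 := by
      simp only [sub_mul, mul_sub, smul_mul_assoc, mul_smul_comm, smul_smul, one_mul,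
        mul_one, add_smul]
      module
    rw [expand, hrs, hsum, smul_sub, smul_smul, mul_inv_cancel₀ (two_ne_zero), one_smul,
      mul_sub, mul_add, hMM, smul_smul, mul_smul_comm, mul_one]
    simp only [one_smul]
    abel
  have hdet0 : (M - r • 1).det * (M - s • 1).det = 0 := by
    rw [← Matrix.det_mul, ← key, Matrix.det_mul, Matrix.det_smul, h1]
    simp
  have main : ∀ a b : ℂ, a * b = 1 → a + b = 2 * μ → (M - a • 1).det = 0 → μ.re < 0 := by
    intro a b hab hsumab hdet
    have haneg : a.re < 0 := hH a ((mem_spec_iff M a).2 hdet)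
    have ha0 : a ≠ 0 := by rintro rfl; simp at hab
    have hb : b = a⁻¹ := eq_inv_of_mul_eq_one_right (by rw [mul_comm]; rwa [mul_comm] at hab)
    have h2μ : 2 * μ = a + a⁻¹ := by rw [← hsumab, hb]
    have hns : 0 < Complex.normSq a := Complex.normSq_pos.2 ha0
    have hre : 2 * μ.re = a.re + a.re / Complex.normSq a := by
      have := congrArg Complex.re h2μ
      simpa [Complex.add_re, Complex.inv_re, Complex.mul_re] using this
    have : a.re / Complex.normSq a < 0 := div_neg_of_neg_of_pos haneg hns
    linarith
  rcases mul_eq_zero.1 hdet0 with h | h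
  · exact main r s hrs hsum h
  · exact main s r (by rw [mul_comm]; exact hrs) (by rw [add_comm]; exact hsum) h

lemma commute_inv {A B : Mat} (h : Commute A B) (hB : IsUnit B.det) : Commute A B⁻¹ := by
  obtain ⟨u, hu⟩ := (Matrix.isUnit_iff_isUnit_det B).2 hB
  rw [← hu] at h ⊢
  rw [← Matrix.coe_units_inv]
  exact h.units_inv_right

/-- The Cayley-type transform. -/
noncomputable def cay (M : Mat) : Mat := (M + 1) * (M - 1)⁻¹

lemma cay_sub_one {M : Mat} (hd1 : (M - 1).det ≠ 0) :
    cay M - 1 = (2 : ℂ) • (M - 1)⁻¹ := by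
  have h : (M - 1) * (M - 1)⁻¹ = 1 := Matrix.mul_nonsing_inv _ (isUnit_iff_ne_zero.2 hd1)
  calc cay M - 1 = (M + 1) * (M - 1)⁻¹ - (M - 1) * (M - 1)⁻¹ := by rw [cay, h]
    _ = ((2 : ℂ) • 1) * (M - 1)⁻¹ := by rw [← sub_mul]; congr 1; simp [two_smul]
    _ = (2 : ℂ) • (M - 1)⁻¹ := by rw [smul_mul_assoc, one_mul]

lemma cay_sub_one_det_ne {M : Mat} (hd1 : (M - 1).det ≠ 0) : (cay M - 1).det ≠ 0 := by
  rw [cay_sub_one hd1, Matrix.det_smul, Matrix.det_nonsing_inv]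
  simp [Ring.inverse_eq_inv', hd1]

lemma cay_recover {M : Mat} (hd1 : (M - 1).det ≠ 0) : (cay M - 1) * M = 1 + cay M := by
  have h : cay M * (M - 1) = M + 1 := by
    rw [cay, mul_assoc, Matrix.nonsing_inv_mul _ (isUnit_iff_ne_zero.2 hd1), mul_one]
  have h2 : cay M * M = M + 1 + cay M := by
    rwa [mul_sub, mul_one, sub_eq_iff_eq_add] at h
  rw [sub_mul, one_mul, h2]; abel

lemma cay_newton_step {M : Mat} (hd : M.det ≠ 0) (hd1 : (M - 1).det ≠ 0)
    (hN1 : ((2 : ℂ)⁻¹ • (M + M⁻¹) - 1).det ≠ 0) :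
    cay ((2 : ℂ)⁻¹ • (M + M⁻¹)) = (cay M) ^ 2 := by
  set N := (2 : ℂ)⁻¹ • (M + M⁻¹) with hN
  have hdu : IsUnit M.det := isUnit_iff_ne_zero.2 hd
  have hd1u : IsUnit (M - 1).det := isUnit_iff_ne_zero.2 hd1
  have hMM : M * M⁻¹ = 1 := Matrix.mul_nonsing_inv M hdu
  have hMM' : M⁻¹ * M = 1 := Matrix.nonsing_inv_mul M hdu
  -- commutation toolbox
  have cM1 : Commute M (M - 1) := by unfold Commute SemiconjBy; noncomm_ring
  have cP : Commute M (cay M) :=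
    Commute.mul_right (by unfold Commute SemiconjBy; noncomm_ring) (commute_inv cM1 hd1u)
  have cP1 : Commute (cay M) (M - 1) :=
    Commute.mul_left (by unfold Commute SemiconjBy; noncomm_ring)
      ((commute_inv (Commute.refl _) hd1u).symm)
  -- key identities
  have id1 : (2 : ℂ) • (M * (N - 1)) = (M - 1) ^ 2 := by
    rw [hN, mul_sub, mul_smul_comm, smul_sub, smul_smul, mul_inv_cancel₀ (two_ne_zero),
      one_smul, mul_add, hMM]
    noncomm_ring
    simp [two_smul]
  have id2 : (2 : ℂ) • (M * (N + 1)) = (M + 1) ^ 2 := by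
    rw [hN, mul_add, mul_smul_comm, smul_add, smul_smul, mul_inv_cancel₀ (two_ne_zero),
      one_smul, mul_add, hMM]
    noncomm_ring
    simp [two_smul]
  have hPM : cay M * (M - 1) = M + 1 := by
    rw [cay, mul_assoc, Matrix.nonsing_inv_mul _ hd1u, mul_one]
  have key2 : (2 : ℂ) • (M * ((cay M) ^ 2 * (N - 1))) = (2 : ℂ) • (M * (N + 1)) := by
    calc (2 : ℂ) • (M * ((cay M) ^ 2 * (N - 1)))
        = (cay M) ^ 2 * ((2 : ℂ) • (M * (N - 1))) := by
          rw [← mul_assoc, (cP.pow_right 2).eq, mul_assoc, mul_smul_comm]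
      _ = (cay M) ^ 2 * (M - 1) ^ 2 := by rw [id1]
      _ = (cay M * (M - 1)) ^ 2 := (cP1.mul_pow 2).symm
      _ = (M + 1) ^ 2 := by rw [hPM]
      _ = (2 : ℂ) • (M * (N + 1)) := id2.symm
  have key1 : M * ((cay M) ^ 2 * (N - 1)) = M * (N + 1) :=
    smul_right_injective _ (two_ne_zero) key2
  have key : (cay M) ^ 2 * (N - 1) = N + 1 := by
    have := congrArg (fun X => M⁻¹ * X) key1
    simpa [← mul_assoc, hMM'] using this
  -- conclude
  have hN1u : IsUnit (N - 1).det := isUnit_iff_ne_zero.2 hN1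
  calc cay N = cay N * ((N - 1) * (N - 1)⁻¹) := by rw [Matrix.mul_nonsing_inv _ hN1u, mul_one]
    _ = (cay N * (N - 1)) * (N - 1)⁻¹ := by rw [mul_assoc]
    _ = (N + 1) * (N - 1)⁻¹ := by
          rw [cay, mul_assoc (N + 1), Matrix.nonsing_inv_mul _ hN1u, mul_one]
    _ = ((cay M) ^ 2 * (N - 1)) * (N - 1)⁻¹ := by rw [key]
    _ = (cay M) ^ 2 * ((N - 1) * (N - 1)⁻¹) := by rw [mul_assoc]
    _ = (cay M) ^ 2 := by rw [Matrix.mul_nonsing_inv _ hN1u, mul_one]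

lemma norm_spectrum_cay_lt {M : Mat} (hH : ∀ μ ∈ spectrum ℂ M, μ.re < 0)
    (hd1 : (M - 1).det ≠ 0) : ∀ z ∈ spectrum ℂ (cay M), ‖z‖₊ < 1 := by
  intro z hz
  have h11 : (M - 1) * (M - 1)⁻¹ = 1 := Matrix.mul_nonsing_inv _ (isUnit_iff_ne_zero.2 hd1)
  have hdet : ((1 - z) • M + (1 + z) • 1).det = 0 := by
    have h0 : (cay M - z • 1).det = 0 := (mem_spec_iff _ _).1 hz
    have hfac : cay M - z • 1 = ((1 - z) • M + (1 + z) • 1) * (M - 1)⁻¹ := by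
      have e1 : ((1 : ℂ) - z) • M + (1 + z) • (1 : Mat) = (M + 1) - z • (M - 1) := by module
      rw [e1, sub_mul, smul_mul_assoc, h11, cay]
    rw [hfac, Matrix.det_mul] at h0
    rcases mul_eq_zero.1 h0 with h | h
    · exact h
    · exact absurd h (by rw [Matrix.det_nonsing_inv]; simp [Ring.inverse_eq_inv', hd1])
  have hz1 : z ≠ 1 := by
    rintro rfl
    rw [show ((1 : ℂ) - 1) • M + ((1 : ℂ) + 1) • (1 : Mat) = (2 : ℂ) • 1 by module,
      Matrix.det_smul, Matrix.det_one, mul_one] at hdet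
    exact (pow_ne_zero (Fintype.card (Fin n)) (two_ne_zero)) hdet
  have hz1' : (1 : ℂ) - z ≠ 0 := sub_ne_zero.2 (Ne.symm hz1)
  set lam : ℂ := -(1 + z) / (1 - z) with hlam
  have hdet2 : (M - lam • 1).det = 0 := by
    have hfac2 : (1 - z) • (M - lam • 1) = (1 - z) • M + (1 + z) • 1 := by
      rw [hlam, smul_sub, smul_smul, mul_comm, div_mul_cancel₀ _ hz1']
      module
    have := congrArg Matrix.det hfac2
    rw [Matrix.det_smul, hdet, mul_eq_zero] at this
    rcases this with h | h
    · exact absurd h (pow_ne_zero (Fintype.card (Fin n)) hz1')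
    · exact h
  have hlre : lam.re < 0 := hH lam ((mem_spec_iff _ _).2 hdet2)
  have hlam1 : lam - 1 ≠ 0 := by
    intro h
    rw [sub_eq_zero] at h
    rw [h] at hlre
    norm_num at hlre
  have hzval : z = (lam + 1) / (lam - 1) := by
    rw [hlam]
    field_simp
    ring
  have hnum : Complex.normSq (lam + 1) < Complex.normSq (lam - 1) := by
    have h4 : Complex.normSq (lam - 1) - Complex.normSq (lam + 1) = -4 * lam.re := by
      simp [Complex.normSq_apply, Complex.sub_re, Complex.sub_im, Complex.add_re,
        Complex.add_im]
      ring
    nlinarith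
  have hden : 0 < Complex.normSq (lam - 1) := Complex.normSq_pos.2 hlam1
  have hnsq : Complex.normSq z < 1 := by
    rw [hzval, Complex.normSq_div]
    rw [div_lt_one hden]
    exact hnum
  have : ‖z‖ < 1 := by
    rw [Complex.norm_def, show (1 : ℝ) = Real.sqrt 1 by simp]
    exact Real.sqrt_lt_sqrt (Complex.normSq_nonneg z) (by simpa using hnsq)
  exact_mod_cast this

section Norm

attribute [local instance] Matrix.linftyOpNormedRing Matrix.linftyOpNormedAlgebra

lemma spectralRadius_cay_lt {M : Mat} (hH : ∀ μ ∈ spectrum ℂ M, μ.re < 0)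
    (hd1 : (M - 1).det ≠ 0) : spectralRadius ℂ (cay M) < 1 := by
  rcases subsingleton_or_nontrivial Mat with h | h
  · rw [spectrum.SpectralRadius.of_subsingleton]; norm_num
  · have := spectrum.spectralRadius_lt_of_forall_lt (cay M)
      (r := 1) (norm_spectrum_cay_lt hH hd1)
    simpa using this

lemma entry_norm_le (M : Mat) (i j : Fin n) : ‖M i j‖ ≤ ‖M‖ := by
  have h1 : ‖M i j‖₊ ≤ ∑ j', ‖M i j'‖₊ :=
    Finset.single_le_sum (f := fun j' => ‖M i j'‖₊) (fun _ _ => zero_le) (Finset.mem_univ j)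
  have h2 : (∑ j', ‖M i j'‖₊) ≤ Finset.univ.sup fun i' => ∑ j', ‖M i' j'‖₊ :=
    Finset.le_sup (f := fun i' => ∑ j', ‖M i' j'‖₊) (Finset.mem_univ i)
  have := h1.trans h2
  rw [← Matrix.linfty_opNNNorm_def] at this
  exact_mod_cast this

lemma tendsto_entries {f : ℕ → Mat} {L : Mat} (h : Tendsto f atTop (nhds L)) (i j : Fin n) :
    Tendsto (fun k => f k i j) atTop (nhds (L i j)) := by
  exact ((continuous_id.matrix_elem i j).tendsto L).comp h

lemma complex_tendsto {C : ℕ → Mat}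
    (hprops : ∀ k, (∀ μ ∈ spectrum ℂ (C k), μ.re < 0) ∧ (C k).det ≠ 0)
    (hrecC : ∀ k, C (k + 1) = (2 : ℂ)⁻¹ • (C k + (C k)⁻¹)) (i j : Fin n) :
    Tendsto (fun k => C k i j) atTop (nhds ((-1 : Mat) i j)) := by
  set B : ℕ → Mat := fun k => cay (C k) with hB
  have hd1 : ∀ k, ((C k) - 1).det ≠ 0 := fun k => det_sub_one_ne_zero (hprops k).1
  have hBpow : ∀ k, B k = (B 0) ^ (2 ^ k) := by
    intro k
    induction k with
    | zero => simp
    | succ k ih =>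
      have hstep : B (k + 1) = (B k) ^ 2 := by
        rw [hB]
        simp only
        rw [hrecC k]
        exact cay_newton_step (hprops k).2 (hd1 k)
          (by have := hd1 (k + 1); rwa [hrecC k] at this)
      rw [hstep, ih, ← pow_mul, pow_succ]
  have hsr : spectralRadius ℂ (B 0) < 1 := spectralRadius_cay_lt (hprops 0).1 (hd1 0)
  have hp : Tendsto (fun m : ℕ => (B 0) ^ m) atTop (nhds 0) :=
    tendsto_pow_zero_of_spectralRadius_lt_one _ hsr
  have h2k : Tendsto (fun k : ℕ => 2 ^ k) atTop atTop :=
    tendsto_pow_atTop_atTop_of_one_lt (by norm_num)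
  have hBt : Tendsto B atTop (nhds 0) := by
    rw [show B = (fun m => (B 0) ^ m) ∘ (fun k => 2 ^ k) from funext hBpow]
    exact hp.comp h2k
  have hrecov : ∀ k, C k = Ring.inverse (B k - 1) * (1 + B k) := by
    intro k
    have hdB : IsUnit (B k - 1).det := isUnit_iff_ne_zero.2 (cay_sub_one_det_ne (hd1 k))
    have h1 : (B k - 1) * C k = 1 + B k := cay_recover (hd1 k)
    have h2 := congrArg (fun X => (B k - 1)⁻¹ * X) h1
    rw [← mul_assoc, Matrix.nonsing_inv_mul _ hdB, one_mul] at h2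
    rw [h2, Matrix.nonsing_inv_eq_ringInverse]
  have hu : IsUnit (-1 : Mat) := isUnit_one.neg
  have hBt1 : Tendsto (fun k => B k - 1) atTop (nhds (-1 : Mat)) := by
    have := hBt.sub (tendsto_const_nhds (x := (1 : Mat)))
    simpa [zero_sub] using this
  have hcont : Tendsto (fun k => Ring.inverse (B k - 1) * (1 + B k)) atTop
      (nhds (Ring.inverse (-1 : Mat) * (1 + 0))) := by
    apply Filter.Tendsto.mul
    · have hc := NormedRing.inverse_continuousAt hu.unit
      rw [hu.unit_spec] at hc
      exact hc.tendsto.comp hBt1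
    · exact tendsto_const_nhds.add hBt
  have hval : Ring.inverse (-1 : Mat) * (1 + 0) = -1 := by
    rw [← Matrix.nonsing_inv_eq_ringInverse, add_zero, mul_one,
      Matrix.inv_eq_right_inv (by rw [neg_mul_neg, one_mul])]
  have hC : Tendsto C atTop (nhds (-1 : Mat)) := by
    rw [funext hrecov]
    rw [hval] at hcont
    exact hcont
  exact tendsto_entries hC i j


end Norm

lemma map_complex_inv {A : Matrix (Fin n) (Fin n) ℝ} (h : IsUnit A.det) :
    (A.map (algebraMap ℝ ℂ))⁻¹ = A⁻¹.map (algebraMap ℝ ℂ) := by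
  apply Matrix.inv_eq_right_inv
  rw [← Matrix.map_mul, Matrix.mul_nonsing_inv _ h,
    Matrix.map_one _ (map_zero _) (map_one _)]

lemma isUnit_det_iff_map (A : Matrix (Fin n) (Fin n) ℝ) :
    IsUnit A.det ↔ (A.map (algebraMap ℝ ℂ)).det ≠ 0 := by
  rw [← RingHom.mapMatrix_apply, ← RingHom.map_det, isUnit_iff_ne_zero]
  exact (map_ne_zero_iff _ (RingHom.injective _)).symm

lemma map_step {A : Matrix (Fin n) (Fin n) ℝ} (h : IsUnit A.det) :
    ((2 : ℝ)⁻¹ • (A + A⁻¹)).map (algebraMap ℝ ℂ)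
      = (2 : ℂ)⁻¹ • (A.map (algebraMap ℝ ℂ) + (A.map (algebraMap ℝ ℂ))⁻¹) := by
  rw [map_complex_inv h]
  ext i j
  simp [Matrix.map_apply, Matrix.smul_apply, Matrix.add_apply]
  ring

/-- For Hurwitz invertible `A`, the Newton iteration
`A₀ = A`, `A_{k+1} = (A_k + A_k⁻¹)/2` produces Hurwitz invertible iterates
converging to `-I`. -/
theorem sign_newton_converges_to_neg_one {n : ℕ}
    (A : Matrix (Fin n) (Fin n) ℝ)
    (hA : IsHurwitz A) (hinv : IsUnit A.det)
    (Aseq : ℕ → Matrix (Fin n) (Fin n) ℝ)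
    (h0 : Aseq 0 = A)
    (hrec : ∀ k, Aseq (k + 1) = (2 : ℝ)⁻¹ • (Aseq k + (Aseq k)⁻¹)) :
    (∀ k, IsHurwitz (Aseq k) ∧ IsUnit (Aseq k).det) ∧
    Tendsto Aseq atTop (nhds (-1)) := by
  have props : ∀ k, IsHurwitz (Aseq k) ∧ IsUnit (Aseq k).det := by
    intro k
    induction k with
    | zero => rw [h0]; exact ⟨hA, hinv⟩
    | succ k ih =>
      have hmap : (Aseq (k + 1)).map (algebraMap ℝ ℂ)
          = (2 : ℂ)⁻¹ • ((Aseq k).map (algebraMap ℝ ℂ)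
              + ((Aseq k).map (algebraMap ℝ ℂ))⁻¹) := by
        rw [hrec k, map_step ih.2]
      constructor
      · refine fun μ hμ => ?_
        rw [hmap] at hμ
        exact hurwitz_step ih.1 μ hμ
      · rw [isUnit_det_iff_map, hmap]
        exact det_ne_zero_of_hurwitz (hurwitz_step ih.1)
  refine ⟨props, ?_⟩
  set C : ℕ → Matrix (Fin n) (Fin n) ℂ := fun k => (Aseq k).map (algebraMap ℝ ℂ) with hCdef
  have hpropsC : ∀ k, (∀ μ ∈ spectrum ℂ (C k), μ.re < 0) ∧ (C k).det ≠ 0 :=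
    fun k => ⟨(props k).1, (isUnit_det_iff_map _).1 (props k).2⟩
  have hrecC : ∀ k, C (k + 1) = (2 : ℂ)⁻¹ • (C k + (C k)⁻¹) := by
    intro k
    show (Aseq (k + 1)).map (algebraMap ℝ ℂ) = _
    rw [hrec k, map_step (props k).2]
  have hent : ∀ i j, Tendsto (fun k => C k i j) atTop
      (nhds ((-1 : Matrix (Fin n) (Fin n) ℂ) i j)) :=
    fun i j => complex_tendsto hpropsC hrecC i j
  apply tendsto_pi_nhds.2
  intro i
  rw [tendsto_pi_nhds]
  intro j
  have h2 : Tendsto (fun k => (C k i j).re) atTop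
      (nhds (((-1 : Matrix (Fin n) (Fin n) ℂ) i j).re)) :=
    (Complex.continuous_re.tendsto _).comp (hent i j)
  have e1 : ∀ k, (C k i j).re = Aseq k i j := fun k => by
    simp [hCdef, Matrix.map_apply]
  have e2 : ((-1 : Matrix (Fin n) (Fin n) ℂ) i j).re
      = (-1 : Matrix (Fin n) (Fin n) ℝ) i j := by
    by_cases hij : i = j <;> simp [Matrix.neg_apply, Matrix.one_apply, hij]
  rw [e2] at h2
  exact h2.congr e1
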